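/- arXiv:2403.19663 — 3 statements merged into one kernel-verified Lean document; each statement's English description precedes it below -/
import Mathlib

section
/- There is exactly one conic through five points of ℙ²(ℂ) in general position: if v₁, …, v₅ ∈ ℂ³ are vectors such that any three of them are linearly independent (so the corresponding five points of ℙ² are pairwise distinct with no three collinear), then the set of homogeneous polynomials of degree 2 in three variables over ℂ vanishing at each of v₁, …, v₅ is a linear subspace of dimension exactly 1. -/
open MvPolynomial
set_option synthInstance.maxHeartbeats 1000000
set_option maxHeartbeats 1000000

noncomputable def lform (a b : Fin 3 → ℂ) : MvPolynomial (Fin 3) ℂ :=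
  C (a 1 * b 2 - a 2 * b 1) * X 0 + C (a 2 * b 0 - a 0 * b 2) * X 1 +
    C (a 0 * b 1 - a 1 * b 0) * X 2

lemma lform_hom (a b : Fin 3 → ℂ) : (lform a b).IsHomogeneous 1 := by
  unfold lform
  exact (((isHomogeneous_C _ _).mul (isHomogeneous_X _ _)).add
    ((isHomogeneous_C _ _).mul (isHomogeneous_X _ _))).add
    ((isHomogeneous_C _ _).mul (isHomogeneous_X _ _))

lemma aeval_lform (a b x : Fin 3 → ℂ) :
    aeval x (lform a b) = Matrix.det (Matrix.of ![a, b, x]) := by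
  simp [lform, Matrix.det_fin_three]; ring

lemma aeval_lform_left (a b : Fin 3 → ℂ) : aeval a (lform a b) = 0 := by
  simp [lform]; ring

lemma aeval_lform_right (a b : Fin 3 → ℂ) : aeval b (lform a b) = 0 := by
  simp [lform]; ring

lemma det_ne {v : Fin 5 → (Fin 3 → ℂ)}
    (hgen : ∀ s : Finset (Fin 5), s.card = 3 →
      LinearIndependent ℂ (fun i : {x : Fin 5 // x ∈ s} => v i.1))
    {i j k : Fin 5} (hij : i ≠ j) (hik : i ≠ k) (hjk : j ≠ k) :
    Matrix.det (Matrix.of ![v i, v j, v k]) ≠ 0 := by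
  have hcard : ({i, j, k} : Finset (Fin 5)).card = 3 := by
    rw [Finset.card_insert_of_notMem (by simp [hij, hik]),
      Finset.card_insert_of_notMem (by simp [hjk]), Finset.card_singleton]
  have h := hgen _ hcard
  have h2 : LinearIndependent ℂ (fun t : Fin 3 => v (![i, j, k] t)) := by
    refine h.comp (fun t => ⟨![i, j, k] t, by fin_cases t <;> simp⟩) ?_
    intro s t hst
    have : ![i,j,k] s = ![i,j,k] t := congrArg Subtype.val hst
    fin_cases s <;> fin_cases t <;> simp_all
  have h3 : LinearIndependent ℂ (fun t : Fin 3 => (Matrix.of ![v i, v j, v k]) t) := by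
    convert h2 using 2 with t
    fin_cases t <;> rfl
  have h4 := Matrix.linearIndependent_rows_iff_isUnit.mp h3
  rw [Matrix.isUnit_iff_isUnit_det, isUnit_iff_ne_zero] at h4
  exact h4

noncomputable def degreeSetEquiv :
    {d : Fin 3 →₀ ℕ | d.degree = 2} ≃ {f : Fin 3 → ℕ // f ∈ Finset.Nat.antidiagonalTuple 3 2} := by
  refine (Equiv.subtypeEquiv Finsupp.equivFunOnFinite ?_)
  intro d
  rw [Finset.Nat.mem_antidiagonalTuple]
  have : d.degree = ∑ i, d i :=
    Finset.sum_subset (Finset.subset_univ _)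
      (fun x _ hx => Finsupp.notMem_support_iff.mp hx)
  rw [Set.mem_setOf_eq, this]
  rfl

lemma finrank_V : Module.finrank ℂ ↥(homogeneousSubmodule (Fin 3) ℂ 2) = 6 := by
  rw [homogeneousSubmodule_eq_finsupp_supported]
  have b := MvPolynomial.basisRestrictSupport ℂ {d : Fin 3 →₀ ℕ | d.degree = 2}
  have : Fintype {d : Fin 3 →₀ ℕ | d.degree = 2} := Fintype.ofEquiv _ degreeSetEquiv.symm
  rw [show (AddMonoidAlgebra.supported ℂ ℂ {d : Fin 3 →₀ ℕ | d.degree = 2}) =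
    restrictSupport ℂ {d : Fin 3 →₀ ℕ | d.degree = 2} from rfl]
  rw [Module.finrank_eq_card_basis b]
  rw [Fintype.card_congr degreeSetEquiv]
  rw [Fintype.card_coe]
  decide

/-- There is exactly one conic through five points of `ℙ²(ℂ)` in general position:
if `v₁, …, v₅ ∈ ℂ³` are such that any three of them are linearly independent, then
the space of homogeneous polynomials of degree 2 in three variables vanishing at
each `vᵢ` has dimension exactly 1.  This is the statement `N₂ = 1`. -/
theorem unique_conic_through_five_general_points
    (v : Fin 5 → (Fin 3 → ℂ))
    (hgen : ∀ s : Finset (Fin 5), s.card = 3 →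
      LinearIndependent ℂ (fun i : {x : Fin 5 // x ∈ s} => v i.1)) :
    Module.finrank ℂ
      ↥(MvPolynomial.homogeneousSubmodule (Fin 3) ℂ 2 ⊓
        ⨅ i : Fin 5, LinearMap.ker
          ((MvPolynomial.aeval (v i) : MvPolynomial (Fin 3) ℂ →ₐ[ℂ] ℂ).toLinearMap)) = 1 := by
  classical
  set V := homogeneousSubmodule (Fin 3) ℂ 2 with hV
  have hft : Fintype {d : Fin 3 →₀ ℕ | d.degree = 2} := Fintype.ofEquiv _ degreeSetEquiv.symm
  have hfd : FiniteDimensional ℂ ↥V := by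
    rw [hV, homogeneousSubmodule_eq_finsupp_supported]
    exact Module.Finite.of_basis (MvPolynomial.basisRestrictSupport ℂ _)
  set L : ↥V →ₗ[ℂ] (Fin 5 → ℂ) :=
    LinearMap.pi (fun i => ((aeval (v i) : MvPolynomial (Fin 3) ℂ →ₐ[ℂ] ℂ).toLinearMap).comp
      V.subtype) with hL
  have hLapp : ∀ (p : ↥V) (i : Fin 5), L p i = aeval (v i) (p : MvPolynomial (Fin 3) ℂ) := by
    intro p i; rfl
  -- the target submodule is the image of ker L
  have hmap : Submodule.map V.subtype (LinearMap.ker L) =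
      V ⊓ ⨅ i : Fin 5, LinearMap.ker
        ((aeval (v i) : MvPolynomial (Fin 3) ℂ →ₐ[ℂ] ℂ).toLinearMap) := by
    ext p
    simp only [Submodule.mem_map, LinearMap.mem_ker, Submodule.mem_inf, Submodule.mem_iInf]
    constructor
    · rintro ⟨⟨q, hq⟩, h1, rfl⟩
      refine ⟨hq, fun i => ?_⟩
      have h2 := congrFun h1 i
      rw [hLapp] at h2
      exact h2
    · rintro ⟨hp, h⟩
      exact ⟨⟨p, hp⟩, funext fun i => by rw [hLapp]; exact h i, rfl⟩
  have heq : Module.finrank ℂ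
      ↥(V ⊓ ⨅ i : Fin 5, LinearMap.ker
        ((aeval (v i) : MvPolynomial (Fin 3) ℂ →ₐ[ℂ] ℂ).toLinearMap)) =
      Module.finrank ℂ ↥(LinearMap.ker L) := by
    rw [← hmap]
    exact (LinearEquiv.finrank_eq
      (Submodule.equivMapOfInjective V.subtype V.injective_subtype (LinearMap.ker L))).symm
  -- key: for each i there is a conic vanishing at the other four points but not at v i
  have hne : ∀ (i a b : Fin 5), a ≠ b → i + a ≠ i + b := by
    intro i a b h h2
    exact h (add_left_cancel h2)
  have hne0 : ∀ (i a : Fin 5), a ≠ 0 → i + a ≠ i := by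
    intro i a h h2
    exact hne i a 0 h (by rw [add_zero]; exact h2)
  have key : ∀ i : Fin 5, ∃ p : ↥V, (∀ j, j ≠ i → L p j = 0) ∧ L p i ≠ 0 := by
    intro i
    set q := lform (v (i+1)) (v (i+2)) * lform (v (i+3)) (v (i+4)) with hq
    have hqV : q ∈ V := by
      rw [hV, mem_homogeneousSubmodule]
      exact (lform_hom _ _).mul (lform_hom _ _)
    refine ⟨⟨q, hqV⟩, ?_, ?_⟩
    · intro j hj
      have hrep : ∃ a : Fin 5, a ≠ 0 ∧ j = i + a :=
        ⟨j - i, sub_ne_zero.mpr hj, by abel⟩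
      obtain ⟨a, ha, rfl⟩ := hrep
      have hall : ∀ b : Fin 5, b ≠ 0 → b = 1 ∨ b = 2 ∨ b = 3 ∨ b = 4 := by decide
      have ha4 := hall a ha
      rw [hLapp]
      show aeval (v (i + a)) q = 0
      rcases ha4 with rfl | rfl | rfl | rfl <;>
        simp [hq, map_mul, aeval_lform_left, aeval_lform_right]
    · rw [hLapp]
      show aeval (v i) q ≠ 0
      rw [hq, map_mul]
      have h1 : aeval (v i) (lform (v (i+1)) (v (i+2))) ≠ 0 := by
        rw [aeval_lform]
        exact det_ne hgen (hne i 1 2 (by decide)) (hne0 i 1 (by decide)) (hne0 i 2 (by decide))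
      have h2 : aeval (v i) (lform (v (i+3)) (v (i+4))) ≠ 0 := by
        rw [aeval_lform]
        exact det_ne hgen (hne i 3 4 (by decide)) (hne0 i 3 (by decide)) (hne0 i 4 (by decide))
      exact mul_ne_zero h1 h2
  have hsurj : Function.Surjective L := by
    intro x
    choose p h0 h1 using key
    refine ⟨∑ i, (x i * (L (p i) i)⁻¹) • p i, ?_⟩
    ext j
    rw [map_sum]
    simp only [LinearMap.map_smul, Finset.sum_apply, Pi.smul_apply, smul_eq_mul]
    rw [Finset.sum_eq_single j]
    · rw [mul_assoc, inv_mul_cancel₀ (h1 j), mul_one]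
    · intro i _ hij
      rw [h0 i j hij.symm, mul_zero]
    · intro h; exact absurd (Finset.mem_univ j) h
  have hrange : LinearMap.range L = ⊤ := LinearMap.range_eq_top.mpr hsurj
  have hrn := L.finrank_range_add_finrank_ker
  rw [hrange, finrank_top] at hrn
  have h5 : Module.finrank ℂ (Fin 5 → ℂ) = 5 := by simp
  rw [h5, finrank_V] at hrn
  rw [heq]
  omega
end

section
/- A sequence N : ℕ → ℚ satisfies Kontsevich's recursion for ℙ² at every degree d ≥ 2 if and only if the four formal power series Γ₁₁₁ = ∑_{d≥1} d³·N d·X^{3d−1}/(3d−1)!, Γ₁₁₂ = ∑_{d≥1} d²·N d·X^{3d−2}/(3d−2)!, Γ₁₂₂ = ∑_{d≥1} d·N d·X^{3d−3}/(3d−3)!, and Γ₂₂₂ = ∑_{d≥2} N d·X^{3d−4}/(3d−4)! in ℚ⟦X⟧ satisfy the WDVV equation Γ₂₂₂ + Γ₁₁₁·Γ₁₂₂ = Γ₁₁₂·Γ₁₁₂. -/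
open Finset PowerSeries

/-- Kontsevich's recursion relation for `ℙ²` at degree `d`:
`N d + ∑ C(3d-4, 3dA-1)·dA³·dB·(N dA)·(N dB) = ∑ C(3d-4, 3dA-2)·dA²·dB²·(N dA)·(N dB)`,
both sums over pairs `(dA, dB)` of positive integers with `dA + dB = d`. -/
def KontsevichRelP2 (N : ℕ → ℚ) (d : ℕ) : Prop :=
  N d + ∑ dA ∈ Finset.Ico 1 d,
      ((3 * d - 4).choose (3 * dA - 1) : ℚ) * (dA : ℚ) ^ 3 * ((d - dA : ℕ) : ℚ) *
        N dA * N (d - dA)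
    = ∑ dA ∈ Finset.Ico 1 d,
      ((3 * d - 4).choose (3 * dA - 2) : ℚ) * (dA : ℚ) ^ 2 * ((d - dA : ℕ) : ℚ) ^ 2 *
        N dA * N (d - dA)

/-- `Γ₁₁₁ = ∑_{d≥1} d³·N d·X^{3d−1}/(3d−1)!`. -/
noncomputable def Gamma111 (N : ℕ → ℚ) : PowerSeries ℚ :=
  PowerSeries.mk fun n =>
    ∑ d ∈ (Finset.range (n + 2)).filter (fun d => 1 ≤ d ∧ 3 * d - 1 = n),
      (d : ℚ) ^ 3 * N d / (Nat.factorial n : ℚ)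

/-- `Γ₁₁₂ = ∑_{d≥1} d²·N d·X^{3d−2}/(3d−2)!`. -/
noncomputable def Gamma112 (N : ℕ → ℚ) : PowerSeries ℚ :=
  PowerSeries.mk fun n =>
    ∑ d ∈ (Finset.range (n + 2)).filter (fun d => 1 ≤ d ∧ 3 * d - 2 = n),
      (d : ℚ) ^ 2 * N d / (Nat.factorial n : ℚ)

/-- `Γ₁₂₂ = ∑_{d≥1} d·N d·X^{3d−3}/(3d−3)!`. -/
noncomputable def Gamma122 (N : ℕ → ℚ) : PowerSeries ℚ :=
  PowerSeries.mk fun n =>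
    ∑ d ∈ (Finset.range (n + 2)).filter (fun d => 1 ≤ d ∧ 3 * d - 3 = n),
      (d : ℚ) * N d / (Nat.factorial n : ℚ)

/-- `Γ₂₂₂ = ∑_{d≥2} N d·X^{3d−4}/(3d−4)!`. -/
noncomputable def Gamma222 (N : ℕ → ℚ) : PowerSeries ℚ :=
  PowerSeries.mk fun n =>
    ∑ d ∈ (Finset.range (n + 2)).filter (fun d => 2 ≤ d ∧ 3 * d - 4 = n),
      N d / (Nat.factorial n : ℚ)

private lemma fact_ne (n : ℕ) : (n.factorial : ℚ) ≠ 0 := by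
  exact_mod_cast n.factorial_ne_zero

lemma coeff_G111 (N : ℕ → ℚ) (d n : ℕ) (hd : 1 ≤ d) (hn : 3 * d - 1 = n) :
    PowerSeries.coeff n (Gamma111 N) = (d : ℚ) ^ 3 * N d / n.factorial := by
  rw [Gamma111, coeff_mk]
  rw [show (Finset.range (n + 2)).filter (fun e => 1 ≤ e ∧ 3 * e - 1 = n) = {d} from ?_]
  · simp
  · ext e; simp only [mem_filter, mem_range, mem_singleton]; omega

lemma coeff_G111_zero (N : ℕ → ℚ) (n : ℕ) (h : n % 3 ≠ 2) :
    PowerSeries.coeff n (Gamma111 N) = 0 := by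
  rw [Gamma111, coeff_mk, Finset.filter_false_of_mem, Finset.sum_empty]
  intro e _ he; omega

lemma coeff_G112 (N : ℕ → ℚ) (d n : ℕ) (hd : 1 ≤ d) (hn : 3 * d - 2 = n) :
    PowerSeries.coeff n (Gamma112 N) = (d : ℚ) ^ 2 * N d / n.factorial := by
  rw [Gamma112, coeff_mk]
  rw [show (Finset.range (n + 2)).filter (fun e => 1 ≤ e ∧ 3 * e - 2 = n) = {d} from ?_]
  · simp
  · ext e; simp only [mem_filter, mem_range, mem_singleton]; omega

lemma coeff_G112_zero (N : ℕ → ℚ) (n : ℕ) (h : n % 3 ≠ 1) :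
    PowerSeries.coeff n (Gamma112 N) = 0 := by
  rw [Gamma112, coeff_mk, Finset.filter_false_of_mem, Finset.sum_empty]
  intro e _ he; omega

lemma coeff_G122 (N : ℕ → ℚ) (d n : ℕ) (hd : 1 ≤ d) (hn : 3 * d - 3 = n) :
    PowerSeries.coeff n (Gamma122 N) = (d : ℚ) * N d / n.factorial := by
  rw [Gamma122, coeff_mk]
  rw [show (Finset.range (n + 2)).filter (fun e => 1 ≤ e ∧ 3 * e - 3 = n) = {d} from ?_]
  · simp
  · ext e; simp only [mem_filter, mem_range, mem_singleton]; omega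

lemma coeff_G122_zero (N : ℕ → ℚ) (n : ℕ) (h : n % 3 ≠ 0) :
    PowerSeries.coeff n (Gamma122 N) = 0 := by
  rw [Gamma122, coeff_mk, Finset.filter_false_of_mem, Finset.sum_empty]
  intro e _ he; omega

lemma coeff_G222 (N : ℕ → ℚ) (d n : ℕ) (hd : 2 ≤ d) (hn : 3 * d - 4 = n) :
    PowerSeries.coeff n (Gamma222 N) = N d / n.factorial := by
  rw [Gamma222, coeff_mk]
  rw [show (Finset.range (n + 2)).filter (fun e => 2 ≤ e ∧ 3 * e - 4 = n) = {d} from ?_]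
  · simp
  · ext e; simp only [mem_filter, mem_range, mem_singleton]; omega

lemma coeff_G222_zero (N : ℕ → ℚ) (n : ℕ) (h : n % 3 ≠ 2) :
    PowerSeries.coeff n (Gamma222 N) = 0 := by
  rw [Gamma222, coeff_mk, Finset.filter_false_of_mem, Finset.sum_empty]
  intro e _ he; omega

lemma prod1_zero (N : ℕ → ℚ) (n : ℕ) (h : n % 3 ≠ 2) :
    PowerSeries.coeff n (Gamma111 N * Gamma122 N) = 0 := by
  rw [PowerSeries.coeff_mul]
  apply Finset.sum_eq_zero
  rintro ⟨i, j⟩ hij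
  rw [Finset.HasAntidiagonal.mem_antidiagonal] at hij
  by_cases hi : i % 3 = 2
  · rw [coeff_G122_zero N j (by omega), mul_zero]
  · rw [coeff_G111_zero N i hi, zero_mul]

lemma prod2_zero (N : ℕ → ℚ) (n : ℕ) (h : n % 3 ≠ 2) :
    PowerSeries.coeff n (Gamma112 N * Gamma112 N) = 0 := by
  rw [PowerSeries.coeff_mul]
  apply Finset.sum_eq_zero
  rintro ⟨i, j⟩ hij
  rw [Finset.HasAntidiagonal.mem_antidiagonal] at hij
  by_cases hi : i % 3 = 1
  · rw [coeff_G112_zero N j (by omega), mul_zero]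
  · rw [coeff_G112_zero N i hi, zero_mul]
lemma prod1_eq (N : ℕ → ℚ) (d : ℕ) (hd : 2 ≤ d) :
    PowerSeries.coeff (3 * d - 4) (Gamma111 N * Gamma122 N) =
      ∑ dA ∈ Finset.Ico 1 d,
        (dA : ℚ) ^ 3 * N dA / (3 * dA - 1).factorial *
          (((d - dA : ℕ) : ℚ) * N (d - dA) / (3 * (d - dA) - 3).factorial) := by
  set n := 3 * d - 4 with hn
  rw [PowerSeries.coeff_mul, Finset.Nat.sum_antidiagonal_eq_sum_range_succ_mk]
  rw [show Finset.range (n + 1) = (Finset.Ico 1 d).image (fun dA => 3 * dA - 1) ∪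
      ((Finset.range (n + 1)).filter (fun i => i % 3 ≠ 2)) from ?_]
  · rw [Finset.sum_union ?hdisj]
    case hdisj =>
      rw [Finset.disjoint_left]
      intro i hi hi'
      simp only [Finset.mem_image, Finset.mem_Ico] at hi
      simp only [Finset.mem_filter] at hi'
      obtain ⟨dA, hdA, rfl⟩ := hi
      exact hi'.2 (by omega)
    rw [Finset.sum_image (fun a ha b hb hab => by
      simp only [Finset.mem_coe, Finset.mem_Ico] at ha hb; omega)]
    rw [Finset.sum_filter]
    have hz : ∀ i ∈ Finset.range (n + 1),
        (if i % 3 ≠ 2 then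
          PowerSeries.coeff i (Gamma111 N) * PowerSeries.coeff (n - i) (Gamma122 N)
        else 0) = 0 := by
      intro i _
      split
      · next hi => rw [coeff_G111_zero N i hi, zero_mul]
      · rfl
    rw [Finset.sum_congr rfl hz, Finset.sum_const, smul_zero, add_zero]
    apply Finset.sum_congr rfl
    intro dA hdA
    rw [Finset.mem_Ico] at hdA
    rw [coeff_G111 N dA _ hdA.1 rfl,
      coeff_G122 N (d - dA) (n - (3 * dA - 1)) (by omega) (by omega),
      show n - (3 * dA - 1) = 3 * (d - dA) - 3 from by omega]
  · ext i
    simp only [Finset.mem_union, Finset.mem_image, Finset.mem_filter, Finset.mem_range,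
      Finset.mem_Ico]
    constructor
    · intro hi
      by_cases h2 : i % 3 = 2
      · exact Or.inl ⟨(i + 1) / 3, by omega, by omega⟩
      · exact Or.inr ⟨hi, h2⟩
    · rintro (⟨dA, hdA, rfl⟩ | ⟨hi, _⟩) <;> omega

lemma prod2_eq (N : ℕ → ℚ) (d : ℕ) (hd : 2 ≤ d) :
    PowerSeries.coeff (3 * d - 4) (Gamma112 N * Gamma112 N) =
      ∑ dA ∈ Finset.Ico 1 d,
        (dA : ℚ) ^ 2 * N dA / (3 * dA - 2).factorial *
          (((d - dA : ℕ) : ℚ) ^ 2 * N (d - dA) / (3 * (d - dA) - 2).factorial) := by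
  set n := 3 * d - 4 with hn
  rw [PowerSeries.coeff_mul, Finset.Nat.sum_antidiagonal_eq_sum_range_succ_mk]
  rw [show Finset.range (n + 1) = (Finset.Ico 1 d).image (fun dA => 3 * dA - 2) ∪
      ((Finset.range (n + 1)).filter (fun i => i % 3 ≠ 1)) from ?_]
  · rw [Finset.sum_union ?hdisj]
    case hdisj =>
      rw [Finset.disjoint_left]
      intro i hi hi'
      simp only [Finset.mem_image, Finset.mem_Ico] at hi
      simp only [Finset.mem_filter] at hi'
      obtain ⟨dA, hdA, rfl⟩ := hi
      exact hi'.2 (by omega)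
    rw [Finset.sum_image (fun a ha b hb hab => by
      simp only [Finset.mem_coe, Finset.mem_Ico] at ha hb; omega)]
    rw [Finset.sum_filter]
    have hz : ∀ i ∈ Finset.range (n + 1),
        (if i % 3 ≠ 1 then
          PowerSeries.coeff i (Gamma112 N) * PowerSeries.coeff (n - i) (Gamma112 N)
        else 0) = 0 := by
      intro i _
      split
      · next hi => rw [coeff_G112_zero N i hi, zero_mul]
      · rfl
    rw [Finset.sum_congr rfl hz, Finset.sum_const, smul_zero, add_zero]
    apply Finset.sum_congr rfl
    intro dA hdA
    rw [Finset.mem_Ico] at hdA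
    rw [coeff_G112 N dA _ hdA.1 rfl,
      coeff_G112 N (d - dA) (n - (3 * dA - 2)) (by omega) (by omega),
      show n - (3 * dA - 2) = 3 * (d - dA) - 2 from by omega]
  · ext i
    simp only [Finset.mem_union, Finset.mem_image, Finset.mem_filter, Finset.mem_range,
      Finset.mem_Ico]
    constructor
    · intro hi
      by_cases h2 : i % 3 = 1
      · exact Or.inl ⟨(i + 2) / 3, by omega, by omega⟩
      · exact Or.inr ⟨hi, h2⟩
    · rintro (⟨dA, hdA, rfl⟩ | ⟨hi, _⟩) <;> omega
lemma key_iff (N : ℕ → ℚ) (d : ℕ) (hd : 2 ≤ d) :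
    PowerSeries.coeff (3 * d - 4) (Gamma222 N + Gamma111 N * Gamma122 N) =
      PowerSeries.coeff (3 * d - 4) (Gamma112 N * Gamma112 N) ↔ KontsevichRelP2 N d := by
  rw [map_add, coeff_G222 N d _ hd rfl, prod1_eq N d hd, prod2_eq N d hd, KontsevichRelP2]
  set n := 3 * d - 4 with hn
  have h1 : ∀ dA ∈ Finset.Ico 1 d,
      (dA : ℚ) ^ 3 * N dA / (3 * dA - 1).factorial *
          (((d - dA : ℕ) : ℚ) * N (d - dA) / (3 * (d - dA) - 3).factorial) =
      ((n.choose (3 * dA - 1) : ℚ) * (dA : ℚ) ^ 3 * ((d - dA : ℕ) : ℚ) *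
        N dA * N (d - dA)) / n.factorial := by
    intro dA hdA
    rw [Finset.mem_Ico] at hdA
    rw [Nat.cast_choose ℚ (show 3 * dA - 1 ≤ n by omega),
      show n - (3 * dA - 1) = 3 * (d - dA) - 3 from by omega]
    have e1 := fact_ne (3 * dA - 1)
    have e2 := fact_ne (3 * (d - dA) - 3)
    have e3 := fact_ne n
    field_simp
  have h2 : ∀ dA ∈ Finset.Ico 1 d,
      (dA : ℚ) ^ 2 * N dA / (3 * dA - 2).factorial *
          (((d - dA : ℕ) : ℚ) ^ 2 * N (d - dA) / (3 * (d - dA) - 2).factorial) =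
      ((n.choose (3 * dA - 2) : ℚ) * (dA : ℚ) ^ 2 * ((d - dA : ℕ) : ℚ) ^ 2 *
        N dA * N (d - dA)) / n.factorial := by
    intro dA hdA
    rw [Finset.mem_Ico] at hdA
    rw [Nat.cast_choose ℚ (show 3 * dA - 2 ≤ n by omega),
      show n - (3 * dA - 2) = 3 * (d - dA) - 2 from by omega]
    have e1 := fact_ne (3 * dA - 2)
    have e2 := fact_ne (3 * (d - dA) - 2)
    have e3 := fact_ne n
    field_simp
  rw [Finset.sum_congr rfl h1, Finset.sum_congr rfl h2, ← Finset.sum_div, ← Finset.sum_div,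
    ← add_div, div_eq_div_iff (fact_ne n) (fact_ne n)]
  exact ⟨fun h => mul_right_cancel₀ (fact_ne n) h, fun h => by rw [h]⟩

theorem kontsevich_p2_iff_wdvv' (N : ℕ → ℚ) :
    (∀ d : ℕ, 2 ≤ d → KontsevichRelP2 N d) ↔
      Gamma222 N + Gamma111 N * Gamma122 N = Gamma112 N * Gamma112 N := by
  constructor
  · intro h
    ext n
    by_cases h2 : n % 3 = 2
    · have hd : 2 ≤ (n + 4) / 3 := by omega
      have := (key_iff N ((n + 4) / 3) hd).2 (h _ hd)
      rwa [show 3 * ((n + 4) / 3) - 4 = n from by omega] at this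
    · rw [map_add, coeff_G222_zero N n h2, prod1_zero N n h2, prod2_zero N n h2, add_zero]
  · intro h d hd
    exact (key_iff N d hd).1 (by rw [h])
/-- A sequence `N : ℕ → ℚ` satisfies Kontsevich's recursion for `ℙ²` at every degree
`d ≥ 2` if and only if the third derivatives of the Gromov–Witten potential satisfy
the WDVV (associativity) equation `Γ₂₂₂ + Γ₁₁₁·Γ₁₂₂ = Γ₁₁₂·Γ₁₁₂`. -/
theorem kontsevich_p2_iff_wdvv (N : ℕ → ℚ) :
    (∀ d : ℕ, 2 ≤ d → KontsevichRelP2 N d) ↔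
      Gamma222 N + Gamma111 N * Gamma122 N = Gamma112 N * Gamma112 N := by
  exact kontsevich_p2_iff_wdvv' N
end

section
/- Let N be the unique function on pairs (d, e) of natural numbers with d + e ≥ 1 satisfying Kontsevich's recursion for ℙ¹×ℙ¹ with N(1,0) = N(0,1) = 1. Then N(d, 1) = 1 for every d ≥ 0; that is, there is exactly one rational curve of bidegree (d,1) through 2d+1 points in general position in ℙ¹×ℙ¹. -/
open Finset

/-- A function `N : ℕ → ℕ → ℚ` (defined on bidegrees `(d,e)`) satisfies Kontsevich's
recursion for `ℙ¹×ℙ¹` if `N 1 0 = N 0 1 = 1` and, for every `(d,e)` with `d + e ≥ 2`,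
`N(d,e) + ∑ C(2d+2e−4, 2dA+2eA−1)·dA·eA·(dA·eB + eA·dB)·N(dA,eA)·N(dB,eB)
       = ∑ C(2d+2e−4, 2dA+2eA−2)·dA·eB·(dA·eB + eA·dB)·N(dA,eA)·N(dB,eB)`,
both sums over decompositions `d = dA + dB`, `e = eA + eB` with `dA+eA ≥ 1`, `dB+eB ≥ 1`. -/
def KontsevichRecursionP1xP1 (N : ℕ → ℕ → ℚ) : Prop :=
  N 1 0 = 1 ∧ N 0 1 = 1 ∧
  ∀ d e : ℕ, 2 ≤ d + e →
    N d e + ∑ p ∈ ((Finset.range (d + 1)) ×ˢ (Finset.range (e + 1))).filter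
        (fun p => 1 ≤ p.1 + p.2 ∧ 1 ≤ (d - p.1) + (e - p.2)),
      ((2 * d + 2 * e - 4).choose (2 * p.1 + 2 * p.2 - 1) : ℚ) * (p.1 : ℚ) * (p.2 : ℚ) *
        ((p.1 : ℚ) * ((e - p.2 : ℕ) : ℚ) + (p.2 : ℚ) * ((d - p.1 : ℕ) : ℚ)) *
        N p.1 p.2 * N (d - p.1) (e - p.2)
    = ∑ p ∈ ((Finset.range (d + 1)) ×ˢ (Finset.range (e + 1))).filter
        (fun p => 1 ≤ p.1 + p.2 ∧ 1 ≤ (d - p.1) + (e - p.2)),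
      ((2 * d + 2 * e - 4).choose (2 * p.1 + 2 * p.2 - 2) : ℚ) * (p.1 : ℚ) * ((e - p.2 : ℕ) : ℚ) *
        ((p.1 : ℚ) * ((e - p.2 : ℕ) : ℚ) + (p.2 : ℚ) * ((d - p.1 : ℕ) : ℚ)) *
        N p.1 p.2 * N (d - p.1) (e - p.2)

/-- There is exactly one rational curve of bidegree `(d,1)` through `2d+1` points in
general position in `ℙ¹×ℙ¹`: `N(d,1) = 1` for every `d ≥ 0`. -/
theorem kontsevich_p1xp1_Nd1 (N : ℕ → ℕ → ℚ) (hN : KontsevichRecursionP1xP1 N) :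
    ∀ d : ℕ, N d 1 = 1 := by
  obtain ⟨h10, h01, hrec⟩ := hN
  -- First: N d 0 = 0 for d ≥ 2
  have hNd0 : ∀ d : ℕ, 2 ≤ d → N d 0 = 0 := by
    intro d hd
    have h := hrec d 0 (by omega)
    rw [Finset.sum_eq_zero, Finset.sum_eq_zero] at h
    · linarith
    · intro p hp
      simp only [Finset.mem_filter, Finset.mem_product, Finset.mem_range] at hp
      have h2 : p.2 = 0 := by omega
      simp [h2]
    · intro p hp
      simp only [Finset.mem_filter, Finset.mem_product, Finset.mem_range] at hp
      have h2 : p.2 = 0 := by omega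
      simp [h2]
  intro d
  induction d with
  | zero => exact h01
  | succ d ih =>
    have h := hrec (d + 1) 1 (by omega)
    rw [Finset.sum_eq_zero, Finset.sum_eq_single_of_mem (1, 0)] at h
    · -- h : N (d+1) 1 + 0 = term at (1,0)
      have hc : (2 * (d + 1) + 2 * 1 - 4).choose (2 * 1 + 2 * 0 - 2) = 1 := by
        simp
      simp only [hc] at h
      simp only [Nat.cast_one, Nat.cast_ofNat] at h
      norm_num at h
      rw [h10, ih] at h
      simpa using h
    · -- (1,0) is in the filter set
      simp only [Finset.mem_filter, Finset.mem_product, Finset.mem_range]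
      omega
    · -- other terms of the RHS sum vanish
      intro p hp hne
      simp only [Finset.mem_filter, Finset.mem_product, Finset.mem_range] at hp
      have h2 : p.2 = 0 ∨ p.2 = 1 := by omega
      rcases h2 with h2 | h2
      · have h1 : p.1 ≠ 1 := by
          intro h1
          apply hne
          exact Prod.ext h1 h2
        have h1' : 2 ≤ p.1 := by omega
        have hz := hNd0 p.1 h1'
        simp [h2, hz]
      · simp [h2]
    · -- LHS sum vanishes
      intro p hp
      simp only [Finset.mem_filter, Finset.mem_product, Finset.mem_range] at hp
      have h2 : p.2 = 0 ∨ p.2 = 1 := by omega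
      rcases h2 with h2 | h2
      · simp [h2]
      · by_cases h1 : p.1 = d
        · have hc : (2 * (d + 1) - 2).choose (2 * p.1 + 2 * p.2 - 1) = 0 := by
            apply Nat.choose_eq_zero_of_lt
            omega
          simp [hc]
        · have hge : 2 ≤ d + 1 - p.1 := by omega
          have hz := hNd0 (d + 1 - p.1) hge
          simp [h2, hz]
end
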